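/- Every decomposable tournament with at least 8 vertices that embeds a diamond is not {−3}-self dual. -/

import Mathlib

/-- A (finite) tournament on a vertex type `V`: for each pair of distinct
vertices exactly one arc. -/
structure Tournament (V : Type*) where
  arc : V → V → Prop
  irrefl : ∀ x, ¬ arc x x
  total : ∀ x y, x ≠ y → (arc x y ↔ ¬ arc y x)

namespace Tournament

variable {V W : Type*}

/-- The dual tournament, obtained by reversing all arcs. -/
def dual (T : Tournament V) : Tournament V where
  arc x y := T.arc y x
  irrefl x := T.irrefl x
  total x y h := T.total y x (Ne.symm h)

/-- The subtournament induced on a subset `X` of the vertex set. -/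
def restrict (T : Tournament V) (X : Set V) : Tournament X where
  arc x y := T.arc x y
  irrefl x := T.irrefl x
  total x y h := T.total x y (fun e => h (Subtype.ext e))

/-- Isomorphism of tournaments: an arc-preserving bijection. -/
def Iso (T : Tournament V) (T' : Tournament W) : Prop :=
  ∃ e : V ≃ W, ∀ x y, T.arc x y ↔ T'.arc (e x) (e y)

/-- `I` is an interval of `T`: every vertex outside `I` dominates all of `I`
or is dominated by all of `I`. -/
def IsInterval (T : Tournament V) (I : Set V) : Prop :=
  ∀ x ∉ I, (∀ y ∈ I, T.arc x y) ∨ (∀ y ∈ I, T.arc y x)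

/-- A tournament is indecomposable if all its intervals are trivial. -/
def Indecomposable (T : Tournament V) : Prop :=
  ∀ I : Set V, T.IsInterval I → I = ∅ ∨ I = Set.univ ∨ ∃ x, I = {x}

def Decomposable (T : Tournament V) : Prop := ¬ T.Indecomposable

/-- Transitive tournament (a linear order). -/
def Transitive (T : Tournament V) : Prop :=
  ∀ x y z, T.arc x y → T.arc y z → T.arc x z

/-- An almost transitive tournament is obtained from a transitive tournament
with at least 3 vertices by reversing the arc between its two extremal
vertices. -/
def AlmostTransitive [Fintype V] (T : Tournament V) : Prop :=
  3 ≤ Fintype.card V ∧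
  ∃ T₀ : Tournament V, T₀.Transitive ∧
    ∃ a b : V, a ≠ b ∧ (∀ y, y ≠ a → T₀.arc a y) ∧ (∀ y, y ≠ b → T₀.arc y b) ∧
      T.arc b a ∧
      ∀ x y, ¬ ((x = a ∧ y = b) ∨ (x = b ∧ y = a)) → (T.arc x y ↔ T₀.arc x y)

/-- Strong connectedness: a directed path between any two distinct vertices. -/
def StronglyConnected (T : Tournament V) : Prop :=
  ∀ x y : V, x ≠ y → Relation.TransGen T.arc x y

/-- `{k}`-hypomorphy: the induced subtournaments on every `k`-element set of
vertices are isomorphic. -/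
def Hypo (T T' : Tournament V) (k : ℕ) : Prop :=
  ∀ X : Set V, X.ncard = k → (T.restrict X).Iso (T'.restrict X)

/-- `{-k}`-hypomorphy, i.e. `{n-k}`-hypomorphy where `n` is the number of
vertices. -/
def MinusHypo [Fintype V] (T T' : Tournament V) (k : ℕ) : Prop :=
  Hypo T T' (Fintype.card V - k)

/-- Self duality. -/
def SelfDual (T : Tournament V) : Prop := T.Iso T.dual

/-- `{-k}`-self duality: removing any `k` vertices yields a self dual
tournament. -/
def MinusSelfDual (T : Tournament V) (k : ℕ) : Prop :=
  ∀ X : Set V, X.ncard = k → (T.restrict Xᶜ).SelfDual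

/-- `{-k}`-reconstructibility: every tournament `{-k}`-hypomorphic to `T` is
isomorphic to `T`. -/
def MinusReconstructible [Fintype V] (T : Tournament V) (k : ℕ) : Prop :=
  ∀ T' : Tournament V, MinusHypo T T' k → T.Iso T'

/-- Strong interval. -/
def IsStrongInterval (T : Tournament V) (X : Set V) : Prop :=
  T.IsInterval X ∧ ∀ Y : Set V, T.IsInterval Y → (X ∩ Y).Nonempty → X ⊆ Y ∨ Y ⊆ X

/-- `P T` : the maximal strong intervals of `T` distinct from the full vertex
set. -/
def P (T : Tournament V) : Set (Set V) :=
  {X | X.Nonempty ∧ X ≠ Set.univ ∧ T.IsStrongInterval X ∧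
    ∀ Y : Set V, Y ≠ Set.univ → T.IsStrongInterval Y → X ⊆ Y → X = Y}

/-- `Ptilde T` : equals `P T` when `T` is strongly connected; otherwise it
consists of the members of `P T` of size at least 2 together with the maximal
unions of consecutive singleton members (i.e. the maximal intervals of `T` all
of whose elements are singleton members of `P T`). -/
def Ptilde (T : Tournament V) : Set (Set V) :=
  {A | (T.StronglyConnected ∧ A ∈ T.P) ∨
    (¬ T.StronglyConnected ∧
      ((A ∈ T.P ∧ 2 ≤ A.ncard) ∨
        (A.Nonempty ∧ (∀ x ∈ A, ({x} : Set V) ∈ T.P) ∧ T.IsInterval A ∧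
          ∀ B : Set V, A ⊆ B → (∀ x ∈ B, ({x} : Set V) ∈ T.P) →
            T.IsInterval B → A = B)))}

/-- Equality of the quotients of `T` and `T'` by a common interval partition
`Part`: between any two distinct blocks, the arcs of `T` and `T'` agree. -/
def QuotientEq (T T' : Tournament V) (Part : Set (Set V)) : Prop :=
  ∀ X ∈ Part, ∀ Y ∈ Part, X ≠ Y → ∀ x ∈ X, ∀ y ∈ Y, (T.arc x y ↔ T'.arc x y)

/-- The set of vertices outside `I` dominated by every vertex of `I`. -/
def Iplus (T : Tournament V) (I : Set V) : Set V :=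
  {x | x ∉ I ∧ ∀ y ∈ I, T.arc y x}

/-- The set of vertices outside `I` dominating every vertex of `I`. -/
def Iminus (T : Tournament V) (I : Set V) : Set V :=
  {x | x ∉ I ∧ ∀ y ∈ I, T.arc x y}

/-- The 3-cycle `C₃`. -/
def C3Tour : Tournament (Fin 3) where
  arc x y := (x = 0 ∧ y = 1) ∨ (x = 1 ∧ y = 2) ∨ (x = 2 ∧ y = 0)
  irrefl := by decide
  total := by decide

/-- The transitive tournament `O_q` on `q` vertices. -/
def LinOrd (q : ℕ) : Tournament (Fin q) where
  arc x y := x < y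
  irrefl x := lt_irrefl x
  total x y h := by
    constructor
    · exact fun hxy hyx => lt_asymm hxy hyx
    · intro hyx
      exact lt_of_le_of_ne (not_lt.mp hyx) h

/-- The positive diamond `δ⁺` (on `{0,1,2,3}`, cycle `0→1→2→0`, all dominating
the center `3`). -/
def DeltaPlus : Tournament (Fin 4) where
  arc x y := (x = 0 ∧ y = 1) ∨ (x = 1 ∧ y = 2) ∨ (x = 2 ∧ y = 0) ∨
    (x = 0 ∧ y = 3) ∨ (x = 1 ∧ y = 3) ∨ (x = 2 ∧ y = 3)
  irrefl := by decide
  total := by decide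

/-- The negative diamond `δ⁻`. -/
def DeltaMinus : Tournament (Fin 4) := DeltaPlus.dual

/-- `T` embeds a diamond: some 4-element subset of the vertices induces a
diamond. -/
def EmbedsDiamond (T : Tournament V) : Prop :=
  ∃ X : Set V, X.ncard = 4 ∧
    ((T.restrict X).Iso DeltaPlus ∨ (T.restrict X).Iso DeltaMinus)

/-- `X` is a positive diamond of `T` with center `d`. -/
def IsPosDiamond (T : Tournament V) (X : Set V) (d : V) : Prop :=
  X.ncard = 4 ∧ d ∈ X ∧ (T.restrict X).Iso DeltaPlus ∧
    (T.restrict (X \ {d})).Iso C3Tour ∧ ∀ y ∈ X \ {d}, T.arc y d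

/-- `X` is a negative diamond of `T` with center `d`. -/
def IsNegDiamond (T : Tournament V) (X : Set V) (d : V) : Prop :=
  X.ncard = 4 ∧ d ∈ X ∧ (T.restrict X).Iso DeltaMinus ∧
    (T.restrict (X \ {d})).Iso C3Tour ∧ ∀ y ∈ X \ {d}, T.arc d y

/-- The tournament obtained from `H` by dilating the vertex `x` by `R`. -/
def Dilate {α β : Type*} (H : Tournament α) (x : α) (R : Tournament β) :
    Tournament ({y : α // y ≠ x} ⊕ β) where
  arc u v :=
    match u, v with
    | .inl y, .inl z => H.arc y.1 z.1
    | .inl y, .inr _ => H.arc y.1 x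
    | .inr _, .inl z => H.arc x z.1
    | .inr u, .inr v => R.arc u v
  irrefl u := by
    cases u with
    | inl y => exact H.irrefl y.1
    | inr u => exact R.irrefl u
  total u v h := by
    cases u with
    | inl y =>
      cases v with
      | inl z =>
        exact H.total y.1 z.1 (fun e => h (congrArg Sum.inl (Subtype.ext e)))
      | inr v => exact H.total y.1 x y.2
    | inr u =>
      cases v with
      | inl z => exact H.total x z.1 (Ne.symm z.2)
      | inr v => exact R.total u v (fun e => h (congrArg Sum.inr e))

/-- The class `I_{n,K}` (for `K` a set of positive integers representing the
negative indices): tournaments on `n` vertices which are indecomposable, not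
self dual, and `{-k}`-self dual for every `k ∈ K`. -/
def ClassI (n : ℕ) (K : Set ℕ) (R : Tournament (Fin n)) : Prop :=
  R.Indecomposable ∧ ¬ R.SelfDual ∧ ∀ k ∈ K, R.MinusSelfDual k

/-- Membership (up to isomorphism) in the class
`Ω_n = C₃(I_{n-2,{-1,-2,-3}}) ∪ O₃(I_{n-2,{-1,-2,-3}}) ∪ O₂(I_{n-1,{-2,-3}})`. -/
def InOmega (n : ℕ) (T : Tournament V) : Prop :=
  (∃ R : Tournament (Fin (n - 2)), ClassI (n - 2) {1, 2, 3} R ∧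
    ∃ x : Fin 3, T.Iso (Dilate C3Tour x R)) ∨
  (∃ R : Tournament (Fin (n - 2)), ClassI (n - 2) {1, 2, 3} R ∧
    ∃ x : Fin 3, T.Iso (Dilate (LinOrd 3) x R)) ∨
  (∃ R : Tournament (Fin (n - 1)), ClassI (n - 1) {2, 3} R ∧
    ∃ x : Fin 2, T.Iso (Dilate (LinOrd 2) x R))

end Tournament


section Stmt13Aux
open Finset

namespace Tournament

variable {V : Type*}

lemma asymm (T : Tournament V) {u v : V} (h1 : T.arc u v) (h2 : T.arc v u) : False := by
  rcases eq_or_ne u v with rfl | hne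
  · exact T.irrefl u h1
  · exact ((T.total u v hne).mp h1) h2

lemma arc_ne (T : Tournament V) {u v : V} (h : T.arc u v) : u ≠ v := by
  rintro rfl; exact T.irrefl u h

lemma arc_total (T : Tournament V) {u v : V} (h : u ≠ v) :
    T.arc u v ∨ T.arc v u := by
  by_cases hc : T.arc u v
  · exact Or.inl hc
  · exact Or.inr (((T.total v u h.symm).mpr) hc)

/-- A pattern embedding: an injective map realizing all arcs in the list `L`. -/
def GoodEmb (T : Tournament V) {k : ℕ} (L : List (Fin k × Fin k)) (f : Fin k → V) : Prop :=
  Function.Injective f ∧ ∀ p ∈ L, T.arc (f p.1) (f p.2)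

/-- Reversed pattern. -/
def swapL {k : ℕ} (L : List (Fin k × Fin k)) : List (Fin k × Fin k) :=
  L.map (fun p => (p.2, p.1))

open scoped Classical in
/-- Number of pattern embeddings avoiding `S`. -/
noncomputable def aCnt [Fintype V] (T : Tournament V) {k : ℕ}
    (L : List (Fin k × Fin k)) (S : Finset V) : ℕ :=
  (Finset.univ.filter
    (fun f : Fin k → V => T.GoodEmb L f ∧ ∀ i, f i ∉ S)).card

open scoped Classical in
/-- Number of pattern embeddings whose range contains `Y`. -/
noncomputable def hCnt [Fintype V] (T : Tournament V) {k : ℕ}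
    (L : List (Fin k × Fin k)) (Y : Finset V) : ℕ :=
  (Finset.univ.filter
    (fun f : Fin k → V => T.GoodEmb L f ∧ ∀ y ∈ Y, ∃ i, f i = y)).card


section Engine

open scoped Classical

variable {V : Type*} [Fintype V] (T : Tournament V) {k : ℕ}

/-- Transport of embedding counts under self-duality of `T - X`. -/
lemma aCnt_swap_of_selfdual (L : List (Fin k × Fin k)) (X : Finset V)
    (hsd : (T.restrict ((↑X : Set V)ᶜ)).SelfDual) :
    T.aCnt L X = T.aCnt (swapL L) X := by
  obtain ⟨e, he⟩ := hsd
  have he' : ∀ u v : ((↑X : Set V)ᶜ : Set V),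
      T.arc u.1 v.1 ↔ T.arc (e v).1 (e u).1 := fun u v => he u v
  have memc : ∀ v : V, v ∉ X → v ∈ ((↑X : Set V)ᶜ : Set V) := by
    intro v hv; simpa using hv
  set E : V → V := fun v => if h : v ∉ X then (e ⟨v, memc v h⟩).1 else v with hE
  set E' : V → V := fun v => if h : v ∉ X then (e.symm ⟨v, memc v h⟩).1 else v with hE'
  have hEnot : ∀ v, v ∉ X → E v ∉ X := by
    intro v hv
    simp only [hE, dif_pos hv]
    intro hc
    exact (e ⟨v, memc v hv⟩).2 (by exact_mod_cast hc)
  have hE'not : ∀ v, v ∉ X → E' v ∉ X := by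
    intro v hv
    simp only [hE', dif_pos hv]
    intro hc
    exact (e.symm ⟨v, memc v hv⟩).2 (by exact_mod_cast hc)
  have hE'E : ∀ v, v ∉ X → E' (E v) = v := by
    intro v hv
    have h1 := hEnot v hv
    simp only [hE, hE', dif_pos hv] at h1 ⊢
    rw [dif_pos h1]
    exact congrArg Subtype.val (e.symm_apply_apply ⟨v, memc v hv⟩)
  have hEE' : ∀ v, v ∉ X → E (E' v) = v := by
    intro v hv
    have h1 := hE'not v hv
    simp only [hE, hE', dif_pos hv] at h1 ⊢
    rw [dif_pos h1]
    exact congrArg Subtype.val (e.apply_symm_apply ⟨v, memc v hv⟩)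
  have harcE : ∀ u v, u ∉ X → v ∉ X → T.arc u v → T.arc (E v) (E u) := by
    intro u v hu hv h
    have := (he' ⟨u, memc u hu⟩ ⟨v, memc v hv⟩).mp h
    simpa only [hE, dif_pos hu, dif_pos hv] using this
  have harcE' : ∀ u v, u ∉ X → v ∉ X → T.arc u v → T.arc (E' v) (E' u) := by
    intro u v hu hv h
    have h2 := (he' (e.symm ⟨v, memc v hv⟩) (e.symm ⟨u, memc u hu⟩))
    rw [e.apply_symm_apply, e.apply_symm_apply] at h2
    have := h2.mpr h
    simpa only [hE', dif_pos hu, dif_pos hv] using this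
  unfold aCnt
  apply Finset.card_nbij' (i := fun f => E ∘ f) (j := fun f => E' ∘ f)
  · intro f hf
    obtain ⟨-, ⟨hinj, harc⟩, havoid⟩ := Finset.mem_filter.mp hf
    refine Finset.mem_filter.mpr ⟨Finset.mem_univ _, ⟨?_, ?_⟩, ?_⟩
    · intro i j hij
      apply hinj
      have : E' (E (f i)) = E' (E (f j)) := congrArg E' hij
      rwa [hE'E _ (havoid i), hE'E _ (havoid j)] at this
    · intro p hp
      unfold swapL at hp
      rw [List.mem_map] at hp
      obtain ⟨q, hq, rfl⟩ := hp
      exact harcE _ _ (havoid q.1) (havoid q.2) (harc q hq)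
    · intro i
      exact hEnot _ (havoid i)
  · intro f hf
    obtain ⟨-, ⟨hinj, harc⟩, havoid⟩ := Finset.mem_filter.mp hf
    refine Finset.mem_filter.mpr ⟨Finset.mem_univ _, ⟨?_, ?_⟩, ?_⟩
    · intro i j hij
      apply hinj
      have : E (E' (f i)) = E (E' (f j)) := congrArg E hij
      rwa [hEE' _ (havoid i), hEE' _ (havoid j)] at this
    · intro p hp
      have hmem : (p.2, p.1) ∈ swapL L := by
        unfold swapL
        rw [List.mem_map]
        exact ⟨p, hp, rfl⟩
      exact harcE' _ _ (havoid p.2) (havoid p.1) (harc _ hmem)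
    · intro i
      exact hE'not _ (havoid i)
  · intro f hf
    obtain ⟨-, -, havoid⟩ := Finset.mem_filter.mp hf
    funext i
    exact hE'E _ (havoid i)
  · intro f hf
    obtain ⟨-, -, havoid⟩ := Finset.mem_filter.mp hf
    funext i
    exact hEE' _ (havoid i)

/-- Counting 3-element supersets of `S` avoiding the range of an injection. -/
lemma card_supersets_avoiding (S : Finset V) (f : Fin k → V)
    (hinj : Function.Injective f) (hSf : ∀ i, f i ∉ S) (hS : S.card ≤ 3) :
    (((Finset.univ : Finset V).powersetCard 3).filter
      (fun X => S ⊆ X ∧ ∀ i, f i ∉ X)).card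
      = (Fintype.card V - S.card - k).choose (3 - S.card) := by
  set R : Finset V := Finset.univ.image f with hR
  have hRcard : R.card = k := by
    rw [hR, Finset.card_image_of_injective _ hinj, Finset.card_univ, Fintype.card_fin]
  have hmemR : ∀ v, v ∈ R ↔ ∃ i, f i = v := by
    intro v; simp [hR]
  have hSR : ∀ s ∈ S, s ∉ R := by
    intro s hs hsR
    obtain ⟨i, rfl⟩ := (hmemR s).mp hsR
    exact hSf i hs
  have hpred : ∀ X : Finset V, ((∀ i, f i ∉ X) ↔ (∀ r ∈ R, r ∉ X)) := by
    intro X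
    constructor
    · intro h r hr
      obtain ⟨i, rfl⟩ := (hmemR r).mp hr
      exact h i
    · intro h i
      exact h (f i) ((hmemR (f i)).mpr ⟨i, rfl⟩)
  have hfilt : (((Finset.univ : Finset V).powersetCard 3).filter
      (fun X => S ⊆ X ∧ ∀ i, f i ∉ X))
      = (((Finset.univ : Finset V).powersetCard 3).filter
      (fun X => S ⊆ X ∧ ∀ r ∈ R, r ∉ X)) := by
    apply Finset.filter_congr
    intro X _
    rw [hpred X]
  rw [hfilt]
  have key : (((Finset.univ : Finset V).powersetCard 3).filter
      (fun X => S ⊆ X ∧ ∀ r ∈ R, r ∉ X)).card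
      = ((((Finset.univ : Finset V) \ S) \ R).powersetCard (3 - S.card)).card := by
    apply Finset.card_bij' (i := fun X _ => X \ S) (j := fun Z _ => Z ∪ S)
    · intro X hX
      obtain ⟨hX1, hX2, hX3⟩ := Finset.mem_filter.mp hX
      rw [Finset.mem_powersetCard] at hX1
      rw [Finset.mem_powersetCard]
      constructor
      · intro a ha
        rw [Finset.mem_sdiff] at ha ⊢
        refine ⟨Finset.mem_sdiff.mpr ⟨Finset.mem_univ _, ha.2⟩, ?_⟩
        intro haR
        exact hX3 a haR ha.1
      · rw [Finset.card_sdiff_of_subset hX2, hX1.2]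
    · intro Z hZ
      rw [Finset.mem_powersetCard] at hZ
      obtain ⟨hZ1, hZ2⟩ := hZ
      have hZS : ∀ a ∈ Z, a ∉ S := by
        intro a ha haS
        have h3 := hZ1 ha
        rw [Finset.mem_sdiff] at h3
        exact (Finset.mem_sdiff.mp h3.1).2 haS
      refine Finset.mem_filter.mpr ⟨?_, Finset.subset_union_right, ?_⟩
      · rw [Finset.mem_powersetCard]
        refine ⟨Finset.subset_univ _, ?_⟩
        rw [Finset.card_union_of_disjoint (Finset.disjoint_left.mpr hZS), hZ2]
        omega
      · intro r hr hrZ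
        rcases Finset.mem_union.mp hrZ with h | h
        · exact (Finset.mem_sdiff.mp (hZ1 h)).2 hr
        · exact hSR r h hr
    · intro X hX
      obtain ⟨-, hX2, -⟩ := Finset.mem_filter.mp hX
      exact Finset.sdiff_union_of_subset hX2
    · intro Z hZ
      rw [Finset.mem_powersetCard] at hZ
      apply Finset.union_sdiff_cancel_right
      exact Finset.disjoint_left.mpr (fun a ha haS => by
        have h3 := hZ.1 ha
        rw [Finset.mem_sdiff] at h3
        exact (Finset.mem_sdiff.mp h3.1).2 haS)
  rw [key, Finset.card_powersetCard]
  congr 1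
  rw [Finset.card_sdiff_of_subset, Finset.card_sdiff_of_subset (Finset.subset_univ _), Finset.card_univ]
  · rw [hRcard]
  · intro a ha
    rw [Finset.mem_sdiff]
    exact ⟨Finset.mem_univ _, fun haS => hSR a haS ha⟩

/-- Double counting: summing avoid-counts over 3-element supersets of `S`. -/
lemma sum_aCnt (L : List (Fin k × Fin k)) (S : Finset V) (hS : S.card ≤ 3) :
    ∑ X ∈ ((Finset.univ : Finset V).powersetCard 3).filter (fun X => S ⊆ X),
      T.aCnt L X
    = (Fintype.card V - S.card - k).choose (3 - S.card) * T.aCnt L S := by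
  have h1 : ∀ X : Finset V, T.aCnt L X
      = ∑ f ∈ (Finset.univ : Finset (Fin k → V)),
          (if T.GoodEmb L f ∧ ∀ i, f i ∉ X then 1 else 0) := by
    intro X
    unfold aCnt
    rw [Finset.card_filter]
  calc ∑ X ∈ ((Finset.univ : Finset V).powersetCard 3).filter (fun X => S ⊆ X), T.aCnt L X
      = ∑ X ∈ ((Finset.univ : Finset V).powersetCard 3).filter (fun X => S ⊆ X),
          ∑ f ∈ (Finset.univ : Finset (Fin k → V)),
            (if T.GoodEmb L f ∧ ∀ i, f i ∉ X then 1 else 0) := by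
        exact Finset.sum_congr rfl (fun X _ => h1 X)
    _ = ∑ f ∈ (Finset.univ : Finset (Fin k → V)),
          ∑ X ∈ ((Finset.univ : Finset V).powersetCard 3).filter (fun X => S ⊆ X),
            (if T.GoodEmb L f ∧ ∀ i, f i ∉ X then 1 else 0) := Finset.sum_comm
    _ = ∑ f ∈ (Finset.univ : Finset (Fin k → V)),
          (if T.GoodEmb L f ∧ ∀ i, f i ∉ S
            then (Fintype.card V - S.card - k).choose (3 - S.card) else 0) := by
        apply Finset.sum_congr rfl
        intro f _
        by_cases hg : T.GoodEmb L f
        · by_cases ha : ∀ i, f i ∉ S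
          · rw [if_pos ⟨hg, ha⟩]
            have h2 : ∀ X ∈ ((Finset.univ : Finset V).powersetCard 3).filter
                (fun X => S ⊆ X), ((if T.GoodEmb L f ∧ ∀ i, f i ∉ X then 1 else 0) : ℕ)
                = (if (∀ i, f i ∉ X) then 1 else 0) := by
              intro X _
              simp [hg]
            rw [Finset.sum_congr rfl h2, ← Finset.card_filter, Finset.filter_filter]
            exact card_supersets_avoiding S f hg.1 ha hS
          · push_neg at ha
            obtain ⟨i0, hi0⟩ := ha
            rw [if_neg (by intro hcon; exact hcon.2 i0 hi0), Finset.sum_eq_zero]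
            intro X hX
            rw [if_neg]
            intro hcon
            have hSX := (Finset.mem_filter.mp hX).2
            exact hcon.2 i0 (hSX hi0)
        · simp [hg]
    _ = (Fintype.card V - S.card - k).choose (3 - S.card) * T.aCnt L S := by
        rw [Finset.sum_ite, Finset.sum_const, Finset.sum_const, smul_eq_mul, smul_zero,
          add_zero, mul_comm]
        rfl

/-- Avoid-counts for small sets agree between a pattern and its reverse. -/
lemma aCnt_eq_small (L : List (Fin k × Fin k)) (hk : k + 3 ≤ Fintype.card V)
    (hX3 : ∀ X : Finset V, X.card = 3 → T.aCnt L X = T.aCnt (swapL L) X)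
    (S : Finset V) (hS : S.card ≤ 3) : T.aCnt L S = T.aCnt (swapL L) S := by
  have h1 := T.sum_aCnt L S hS
  have h2 := T.sum_aCnt (swapL L) S hS
  have h3 : ∑ X ∈ ((Finset.univ : Finset V).powersetCard 3).filter (fun X => S ⊆ X),
      T.aCnt L X
      = ∑ X ∈ ((Finset.univ : Finset V).powersetCard 3).filter (fun X => S ⊆ X),
      T.aCnt (swapL L) X := by
    apply Finset.sum_congr rfl
    intro X hX
    have hXc : X.card = 3 := (Finset.mem_powersetCard.mp (Finset.mem_filter.mp hX).1).2
    exact hX3 X hXc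
  have hpos : 0 < (Fintype.card V - S.card - k).choose (3 - S.card) :=
    Nat.choose_pos (by omega)
  have := h1.symm.trans (h3.trans h2)
  exact Nat.eq_of_mul_eq_mul_left hpos this

/-- Inclusion-exclusion: hit-counts from avoid-counts. -/
lemma hCnt_alternating (L : List (Fin k × Fin k)) (Y : Finset V) :
    (T.hCnt L Y : ℤ) = ∑ S ∈ Y.powerset, (-1 : ℤ) ^ S.card * (T.aCnt L S : ℤ) := by
  unfold hCnt aCnt
  rw [Finset.card_filter]
  push_cast
  have hterm : ∀ S : Finset V, ((Finset.filter
        (fun f : Fin k → V => T.GoodEmb L f ∧ ∀ i, f i ∉ S) Finset.univ).card : ℤ)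
      = ∑ f ∈ (Finset.univ : Finset (Fin k → V)),
          (if T.GoodEmb L f ∧ ∀ i, f i ∉ S then (1 : ℤ) else 0) := by
    intro S
    rw [Finset.card_filter]
    push_cast
    rfl
  calc (∑ f ∈ (Finset.univ : Finset (Fin k → V)),
        (if T.GoodEmb L f ∧ ∀ y ∈ Y, ∃ i, f i = y then (1 : ℤ) else 0))
      = ∑ f ∈ (Finset.univ : Finset (Fin k → V)),
        ∑ S ∈ Y.powerset, (-1 : ℤ) ^ S.card *
          (if T.GoodEmb L f ∧ ∀ i, f i ∉ S then (1 : ℤ) else 0) := by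
        apply Finset.sum_congr rfl
        intro f _
        by_cases hg : T.GoodEmb L f
        · simp only [hg, true_and]
          have expand : ∏ y ∈ Y, ((if (∀ i, f i ≠ y) then (-1 : ℤ) else 0) + 1)
              = ∑ S ∈ Y.powerset, (∏ y ∈ S, (if (∀ i, f i ≠ y) then (-1 : ℤ) else 0))
                  * ∏ y ∈ (Y \ S), (1 : ℤ) := Finset.prod_add _ _ _
          have lhs_eq : ∏ y ∈ Y, ((if (∀ i, f i ≠ y) then (-1 : ℤ) else 0) + 1)
              = (if (∀ y ∈ Y, ∃ i, f i = y) then (1 : ℤ) else 0) := by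
            by_cases hh : ∀ y ∈ Y, ∃ i, f i = y
            · rw [if_pos hh]
              apply Finset.prod_eq_one
              intro y hy
              obtain ⟨i, hi⟩ := hh y hy
              rw [if_neg, zero_add]
              intro hcon
              exact hcon i hi
            · rw [if_neg hh]
              push_neg at hh
              obtain ⟨y0, hy0, hy0'⟩ := hh
              apply Finset.prod_eq_zero hy0
              rw [if_pos hy0', neg_add_cancel]
          have rhs_eq : ∀ S ∈ Y.powerset,
              (∏ y ∈ S, (if (∀ i, f i ≠ y) then (-1 : ℤ) else 0))
                  * ∏ y ∈ (Y \ S), (1 : ℤ)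
              = (-1 : ℤ) ^ S.card * (if (∀ i, f i ∉ S) then (1 : ℤ) else 0) := by
            intro S _
            rw [Finset.prod_const_one, mul_one]
            by_cases hS : ∀ i, f i ∉ S
            · rw [if_pos hS, mul_one]
              rw [Finset.prod_congr rfl (fun y hy => ?_), Finset.prod_const]
              rw [if_pos]
              intro i hi
              exact hS i (hi ▸ hy)
            · rw [if_neg hS, mul_zero]
              push_neg at hS
              obtain ⟨i0, hi0⟩ := hS
              apply Finset.prod_eq_zero hi0
              rw [if_neg]
              push_neg
              exact ⟨i0, rfl⟩
          rw [← Finset.sum_congr rfl rhs_eq, ← expand, lhs_eq]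
        · simp [hg]
    _ = ∑ S ∈ Y.powerset, (-1 : ℤ) ^ S.card *
          ∑ f ∈ (Finset.univ : Finset (Fin k → V)),
            (if T.GoodEmb L f ∧ ∀ i, f i ∉ S then (1 : ℤ) else 0) := by
        rw [Finset.sum_comm]
        apply Finset.sum_congr rfl
        intro S _
        rw [Finset.mul_sum]
    _ = ∑ S ∈ Y.powerset, (-1 : ℤ) ^ S.card *
          ((Finset.filter (fun f : Fin k → V => T.GoodEmb L f ∧ ∀ i, f i ∉ S)
            Finset.univ).card : ℤ) := by
        apply Finset.sum_congr rfl
        intro S _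
        rw [hterm S]

/-- MAIN ENGINE: hit-counts for triples agree between a pattern and its reverse. -/
lemma hCnt_swap (L : List (Fin k × Fin k)) (hk : k + 3 ≤ Fintype.card V)
    (hmsd : T.MinusSelfDual 3) (Y : Finset V) (hY : Y.card ≤ 3) :
    T.hCnt L Y = T.hCnt (swapL L) Y := by
  have hX3 : ∀ X : Finset V, X.card = 3 → T.aCnt L X = T.aCnt (swapL L) X := by
    intro X hX
    apply T.aCnt_swap_of_selfdual
    apply hmsd
    rw [Set.ncard_coe_finset, hX]
  have h1 := T.hCnt_alternating L Y
  have h2 := T.hCnt_alternating (swapL L) Y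
  have h3 : (T.hCnt L Y : ℤ) = (T.hCnt (swapL L) Y : ℤ) := by
    rw [h1, h2]
    apply Finset.sum_congr rfl
    intro S hS
    have hSY : S ⊆ Y := Finset.mem_powerset.mp hS
    have hScard : S.card ≤ 3 := le_trans (Finset.card_le_card hSY) hY
    rw [T.aCnt_eq_small L hk hX3 S hScard]
  exact_mod_cast h3

end Engine


end Tournament

end Stmt13Aux

section Patterns

open scoped Classical

namespace Tournament

variable {V : Type*} [Fintype V] (T : Tournament V)

/-- The positive diamond pattern: 3-cycle `0→1→2→0` dominating `3`. -/
def L4 : List (Fin 4 × Fin 4) := [(0,1),(1,2),(2,0),(0,3),(1,3),(2,3)]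

/-- `C₃ → O₂`: 3-cycle `0→1→2→0` dominating the pair `3→4`. -/
def L5 : List (Fin 5 × Fin 5) :=
  [(0,1),(1,2),(2,0),(0,3),(1,3),(2,3),(0,4),(1,4),(2,4),(3,4)]

/-- `δ⁺` dilated at a cycle vertex by `O₂`: pair `P = {0,1}` (`0→1`),
`u = 2`, `v = 3`, `w = 4`; quotient cycle `2 → P → 3 → 2`, everything `→ 4`. -/
def LE : List (Fin 5 × Fin 5) :=
  [(0,1),(2,0),(2,1),(0,3),(1,3),(3,2),(2,4),(3,4),(0,4),(1,4)]

lemma hCnt_pos {k : ℕ} (L : List (Fin k × Fin k)) (Y : Finset V) (f : Fin k → V)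
    (hf : T.GoodEmb L f) (hY : ∀ y ∈ Y, ∃ i, f i = y) : 0 < T.hCnt L Y := by
  unfold hCnt
  rw [Finset.card_pos]
  exact ⟨f, Finset.mem_filter.mpr ⟨Finset.mem_univ _, hf, hY⟩⟩

lemma hCnt_triple_le_three (x y z : V) : ({x, y, z} : Finset V).card ≤ 3 := by
  apply le_trans (Finset.card_insert_le _ _)
  have := Finset.card_insert_le y ({z} : Finset V)
  simp only [Finset.card_singleton] at this
  omega

lemma mem_triple_left (x y z : V) : x ∈ ({x, y, z} : Finset V) := by simp
lemma mem_triple_mid (x y z : V) : y ∈ ({x, y, z} : Finset V) := by simp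
lemma mem_triple_right (x y z : V) : z ∈ ({x, y, z} : Finset V) := by simp

lemma inj4 {a b c d : V} (h1 : a ≠ b) (h2 : a ≠ c) (h3 : a ≠ d) (h4 : b ≠ c)
    (h5 : b ≠ d) (h6 : c ≠ d) : Function.Injective ![a, b, c, d] := by
  intro i j hij
  fin_cases i <;> fin_cases j <;> simp_all

lemma inj5 {a b c d e : V} (h1 : a ≠ b) (h2 : a ≠ c) (h3 : a ≠ d) (h4 : a ≠ e)
    (h5 : b ≠ c) (h6 : b ≠ d) (h7 : b ≠ e) (h8 : c ≠ d) (h9 : c ≠ e) (h10 : d ≠ e) :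
    Function.Injective ![a, b, c, d, e] := by
  intro i j hij
  fin_cases i <;> fin_cases j <;> simp_all

/-- Extraction: a `δ⁺` embedding whose range contains a 3-cycle must have the
cycle on the cycle slots, and the fourth vertex is dominated by the cycle. -/
lemma ext4_pos {p q r : V} (hpq : T.arc p q) (hqr : T.arc q r) (hrp : T.arc r p)
    (hpos : 0 < T.hCnt L4 ({p, q, r} : Finset V)) :
    ∃ w : V, T.arc p w ∧ T.arc q w ∧ T.arc r w := by
  unfold hCnt at hpos
  rw [Finset.card_pos] at hpos
  obtain ⟨f, hf⟩ := hpos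
  obtain ⟨-, ⟨hinj, harc⟩, hmarks⟩ := Finset.mem_filter.mp hf
  obtain ⟨a, ha⟩ := hmarks p (mem_triple_left p q r)
  obtain ⟨b, hb⟩ := hmarks q (mem_triple_mid p q r)
  obtain ⟨c, hc⟩ := hmarks r (mem_triple_right p q r)
  have dmem : ∀ s : Fin 4, s ≠ 3 → (s, (3 : Fin 4)) ∈ L4 := by decide
  have ha3 : a ≠ 3 := by
    intro h
    have hb3 : b ≠ 3 := by
      intro h'
      apply T.arc_ne hpq
      rw [← ha, ← hb, h, h']
    have : T.arc (f b) (f 3) := harc _ (dmem b hb3)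
    rw [hb, ← h, ha] at this
    exact T.asymm hpq this
  have hb3 : b ≠ 3 := by
    intro h
    have hc3 : c ≠ 3 := by
      intro h'
      apply T.arc_ne hqr
      rw [← hb, ← hc, h, h']
    have : T.arc (f c) (f 3) := harc _ (dmem c hc3)
    rw [hc, ← h, hb] at this
    exact T.asymm hqr this
  have hc3 : c ≠ 3 := by
    intro h
    have : T.arc (f a) (f 3) := harc _ (dmem a ha3)
    rw [ha, ← h, hc] at this
    exact T.asymm hrp this
  refine ⟨f 3, ?_, ?_, ?_⟩
  · rw [← ha]; exact harc _ (dmem a ha3)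
  · rw [← hb]; exact harc _ (dmem b hb3)
  · rw [← hc]; exact harc _ (dmem c hc3)

end Tournament

end Patterns

section AbstractLayer

set_option maxRecDepth 100000

/-- Abstract layer-forced arcs: layers `0 = I`, `1 = A = I⁻`, `2 = B = I⁺`;
`A → I` and `I → B` arcs are forced. -/
def LForced {n : ℕ} (lay : Fin n → Fin 3) (u v : Fin n) : Prop :=
  (lay u = 1 ∧ lay v = 0) ∨ (lay u = 0 ∧ lay v = 2)

/-- No pattern arc goes against a layer-forced arc. -/
def LConsistent {n : ℕ} (pat : List (Fin n × Fin n)) (lay : Fin n → Fin 3) : Prop :=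
  ∀ p ∈ pat, ¬ LForced lay p.2 p.1

/-- The pattern has a 3-cycle two of whose members are in layer `I`. -/
def IICycle {n : ℕ} (pat : List (Fin n × Fin n)) (lay : Fin n → Fin 3) : Prop :=
  ∃ s t u : Fin n, (s,t) ∈ pat ∧ (t,u) ∈ pat ∧ (u,s) ∈ pat ∧ lay s = 0 ∧ lay t = 0

/-- Witness shape for the `E⁻` extraction. -/
def EWitness {n : ℕ} (pat : List (Fin n × Fin n)) (lay : Fin n → Fin 3) (c : Fin n) : Prop :=
  ∃ zs cs : Fin n, lay zs = 1 ∧ lay cs = 1 ∧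
    (c, zs) ∈ pat ∧ (cs, c) ∈ pat ∧ (cs, zs) ∈ pat

instance {n : ℕ} (lay : Fin n → Fin 3) (u v : Fin n) : Decidable (LForced lay u v) := by
  unfold LForced; infer_instance
instance {n : ℕ} (pat : List (Fin n × Fin n)) (lay : Fin n → Fin 3) :
    Decidable (LConsistent pat lay) := by unfold LConsistent; infer_instance
instance {n : ℕ} (pat : List (Fin n × Fin n)) (lay : Fin n → Fin 3) :
    Decidable (IICycle pat lay) := by
  unfold IICycle
  haveI : ∀ s t u : Fin n, Decidable ((s,t) ∈ pat ∧ (t,u) ∈ pat ∧ (u,s) ∈ pat ∧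
    lay s = 0 ∧ lay t = 0) := fun _ _ _ => inferInstance
  infer_instance
instance {n : ℕ} (pat : List (Fin n × Fin n)) (lay : Fin n → Fin 3) (c : Fin n) :
    Decidable (EWitness pat lay c) := by unfold EWitness; infer_instance

open Tournament

lemma absV1 : ∀ lay : Fin 4 → Fin 3, ∀ a b c : Fin 4, a ≠ b → a ≠ c → b ≠ c →
    lay a = 0 → lay b = 0 → lay c = 2 → LConsistent (swapL L4) lay →
    ((b,a) ∈ swapL L4 → False) → False := by decide

lemma absV2 : ∀ lay : Fin 4 → Fin 3, ∀ a b c : Fin 4, a ≠ b → a ≠ c → b ≠ c →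
    lay a = 0 → lay b = 0 → lay c = 1 → LConsistent L4 lay →
    ((b,a) ∈ L4 → False) → False := by decide

lemma absV3 : ∀ lay : Fin 5 → Fin 3, ∀ a b c : Fin 5, a ≠ b → a ≠ c → b ≠ c →
    lay a = 0 → lay b = 0 → lay c = 2 → LConsistent L5 lay →
    ((b,a) ∈ L5 → False) → IICycle L5 lay := by decide

lemma absV4 : ∀ lay : Fin 5 → Fin 3, ∀ a b c : Fin 5, a ≠ b → a ≠ c → b ≠ c →
    lay a = 0 → lay b = 0 → lay c = 1 → LConsistent (swapL L5) lay →
    ((b,a) ∈ swapL L5 → False) → IICycle (swapL L5) lay := by decide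

lemma absE : ∀ lay : Fin 5 → Fin 3, ∀ a b c : Fin 5, a ≠ b → a ≠ c → b ≠ c →
    lay a = 0 → lay b = 0 → lay c = 2 → LConsistent (swapL LE) lay →
    ((b,a) ∈ swapL LE → False) → EWitness (swapL LE) lay c := by decide

end AbstractLayer

section LayerLemmas

open scoped Classical

namespace Tournament

variable {V : Type*} [Fintype V] (T : Tournament V) {I : Set V}

lemma ne_of_mem_notmem {a b : V} {S : Set V} (ha : a ∈ S) (hb : b ∉ S) : a ≠ b :=
  fun h => hb (h ▸ ha)

lemma Iminus_arc {v y : V} (hv : v ∈ T.Iminus I) (hy : y ∈ I) : T.arc v y := hv.2 y hy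
lemma Iplus_arc {v y : V} (hv : v ∈ T.Iplus I) (hy : y ∈ I) : T.arc y v := hv.2 y hy
lemma Iminus_notI {v : V} (hv : v ∈ T.Iminus I) : v ∉ I := hv.1
lemma Iplus_notI {v : V} (hv : v ∈ T.Iplus I) : v ∉ I := hv.1

lemma layer_tri (hInt : T.IsInterval I) (v : V) :
    v ∈ I ∨ v ∈ T.Iminus I ∨ v ∈ T.Iplus I := by
  by_cases hv : v ∈ I
  · exact Or.inl hv
  · rcases hInt v hv with h | h
    · exact Or.inr (Or.inl ⟨hv, h⟩)
    · exact Or.inr (Or.inr ⟨hv, h⟩)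

lemma A_ne_B {v w : V} {x : V} (hx : x ∈ I) (hv : v ∈ T.Iminus I) (hw : w ∈ T.Iplus I) :
    v ≠ w := by
  intro h
  exact T.asymm (T.Iminus_arc hv hx) (T.Iplus_arc (h ▸ hw) hx)

/-- The layer map of an embedding. -/
noncomputable def layOf (T : Tournament V) (I : Set V) {n : ℕ} (f : Fin n → V) :
    Fin n → Fin 3 :=
  fun s => if f s ∈ I then 0 else if f s ∈ T.Iminus I then 1 else 2

lemma layOf_of_I {n : ℕ} {f : Fin n → V} {s : Fin n} (h : f s ∈ I) :
    layOf T I f s = 0 := by simp [layOf, h]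

lemma layOf_of_A {n : ℕ} {f : Fin n → V} {s : Fin n} (h : f s ∈ T.Iminus I) :
    layOf T I f s = 1 := by simp [layOf, h, T.Iminus_notI h]

lemma layOf_of_B {x : V} (hx : x ∈ I) {n : ℕ} {f : Fin n → V} {s : Fin n}
    (h : f s ∈ T.Iplus I) : layOf T I f s = 2 := by
  have h1 : f s ∉ I := T.Iplus_notI h
  have h2 : f s ∉ T.Iminus I := fun hc => (T.A_ne_B hx hc h) rfl
  simp [layOf, h1, h2]

lemma mem_I_of_layOf {n : ℕ} {f : Fin n → V} {s : Fin n}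
    (h : layOf T I f s = 0) : f s ∈ I := by
  by_contra hc
  by_cases h2 : f s ∈ T.Iminus I <;> simp [layOf, hc, h2] at h

lemma mem_A_of_layOf {n : ℕ} {f : Fin n → V} {s : Fin n}
    (h : layOf T I f s = 1) : f s ∈ T.Iminus I := by
  by_contra hc
  by_cases h2 : f s ∈ I <;> simp [layOf, hc, h2] at h

lemma mem_B_of_layOf (hInt : T.IsInterval I) {n : ℕ} {f : Fin n → V} {s : Fin n}
    (h : layOf T I f s = 2) : f s ∈ T.Iplus I := by
  rcases T.layer_tri hInt (f s) with h1 | h1 | h1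
  · rw [T.layOf_of_I h1] at h; exact absurd h (by decide)
  · rw [T.layOf_of_A h1] at h; exact absurd h (by decide)
  · exact h1

lemma lconsistent_layOf (hInt : T.IsInterval I) {n : ℕ}
    {pat : List (Fin n × Fin n)} {f : Fin n → V} (hf : T.GoodEmb pat f) :
    LConsistent pat (layOf T I f) := by
  intro p hp hforced
  have harc : T.arc (f p.1) (f p.2) := hf.2 p hp
  rcases hforced with ⟨h1, h2⟩ | ⟨h1, h2⟩
  · exact T.asymm harc (T.Iminus_arc (T.mem_A_of_layOf h1) (T.mem_I_of_layOf h2))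
  · exact T.asymm harc (T.Iplus_arc (T.mem_B_of_layOf hInt h2) (T.mem_I_of_layOf h1))

end Tournament

end LayerLemmas

section NoCycles

open scoped Classical

namespace Tournament

variable {V : Type*} [Fintype V] (T : Tournament V) {I : Set V}

/-- In the presence of `{-3}`-self-duality, the interior of any non-full
interval has no 3-cycles. -/
lemma noCycI (hInt : T.IsInterval I) (hIuniv : I ≠ Set.univ)
    (hmsd : T.MinusSelfDual 3) (hn : 8 ≤ Fintype.card V) :
    ∀ x y z : V, x ∈ I → y ∈ I → z ∈ I →
      T.arc x y → T.arc y z → T.arc z x → False := by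
  intro x y z hx hy hz hxy hyz hzx
  obtain ⟨w, hw⟩ : ∃ w, w ∉ I := by
    by_contra hc
    push_neg at hc
    exact hIuniv (Set.eq_univ_iff_forall.mpr hc)
  have hid := T.hCnt_swap L4 (by omega) hmsd ({x, y, w} : Finset V)
    (hCnt_triple_le_three x y w)
  have hxyne := T.arc_ne hxy
  have hyzne := T.arc_ne hyz
  have hzxne := (T.arc_ne hzx).symm
  rcases T.layer_tri hInt w with hwI | hwA | hwB
  · exact hw hwI
  · -- w ∈ A : positive count for swapL L4, vanishing for L4
    have hpos : 0 < T.hCnt (swapL L4) ({x, y, w} : Finset V) := by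
      apply T.hCnt_pos _ _ ![x, z, y, w]
      · refine ⟨inj4 (T.arc_ne hzx).symm hxyne (ne_of_mem_notmem hx hwA.1)
          (T.arc_ne hyz).symm (ne_of_mem_notmem hz hwA.1)
          (ne_of_mem_notmem hy hwA.1), ?_⟩
        intro p hp
        simp only [swapL, L4, List.map_cons, List.map_nil, List.mem_cons,
          List.not_mem_nil, or_false] at hp
        rcases hp with rfl|rfl|rfl|rfl|rfl|rfl
        exacts [hzx, hyz, hxy, T.Iminus_arc hwA hx, T.Iminus_arc hwA hz,
          T.Iminus_arc hwA hy]
      · intro u hu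
        simp only [Finset.mem_insert, Finset.mem_singleton] at hu
        rcases hu with rfl|rfl|rfl
        exacts [⟨0, rfl⟩, ⟨2, rfl⟩, ⟨3, rfl⟩]
    rw [← hid] at hpos
    unfold hCnt at hpos
    rw [Finset.card_pos] at hpos
    obtain ⟨f, hf⟩ := hpos
    obtain ⟨-, hgood, hmarks⟩ := Finset.mem_filter.mp hf
    obtain ⟨a, ha⟩ := hmarks x (mem_triple_left x y w)
    obtain ⟨b, hb⟩ := hmarks y (mem_triple_mid x y w)
    obtain ⟨c, hc⟩ := hmarks w (mem_triple_right x y w)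
    refine absV2 (layOf T I f) a b c ?_ ?_ ?_ ?_ ?_ ?_ ?_ ?_
    · intro h; exact hxyne (by rw [← ha, ← hb, h])
    · intro h; exact (ne_of_mem_notmem hx hwA.1) (by rw [← ha, ← hc, h])
    · intro h; exact (ne_of_mem_notmem hy hwA.1) (by rw [← hb, ← hc, h])
    · exact T.layOf_of_I (ha ▸ hx)
    · exact T.layOf_of_I (hb ▸ hy)
    · exact T.layOf_of_A (hc ▸ hwA)
    · exact T.lconsistent_layOf hInt hgood
    · intro hmem
      have := hgood.2 _ hmem
      rw [hb, ha] at this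
      exact T.asymm hxy this
  · -- w ∈ B : positive count for L4, vanishing for swapL L4
    have hpos : 0 < T.hCnt L4 ({x, y, w} : Finset V) := by
      apply T.hCnt_pos _ _ ![x, y, z, w]
      · refine ⟨inj4 hxyne (T.arc_ne hzx).symm (ne_of_mem_notmem hx hwB.1)
          hyzne (ne_of_mem_notmem hy hwB.1) (ne_of_mem_notmem hz hwB.1), ?_⟩
        intro p hp
        simp only [L4, List.mem_cons, List.not_mem_nil, or_false] at hp
        rcases hp with rfl|rfl|rfl|rfl|rfl|rfl
        exacts [hxy, hyz, hzx, T.Iplus_arc hwB hx, T.Iplus_arc hwB hy,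
          T.Iplus_arc hwB hz]
      · intro u hu
        simp only [Finset.mem_insert, Finset.mem_singleton] at hu
        rcases hu with rfl|rfl|rfl
        exacts [⟨0, rfl⟩, ⟨1, rfl⟩, ⟨3, rfl⟩]
    rw [hid] at hpos
    unfold hCnt at hpos
    rw [Finset.card_pos] at hpos
    obtain ⟨f, hf⟩ := hpos
    obtain ⟨-, hgood, hmarks⟩ := Finset.mem_filter.mp hf
    obtain ⟨a, ha⟩ := hmarks x (mem_triple_left x y w)
    obtain ⟨b, hb⟩ := hmarks y (mem_triple_mid x y w)
    obtain ⟨c, hc⟩ := hmarks w (mem_triple_right x y w)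
    refine absV1 (layOf T I f) a b c ?_ ?_ ?_ ?_ ?_ ?_ ?_ ?_
    · intro h; exact hxyne (by rw [← ha, ← hb, h])
    · intro h; exact (ne_of_mem_notmem hx hwB.1) (by rw [← ha, ← hc, h])
    · intro h; exact (ne_of_mem_notmem hy hwB.1) (by rw [← hb, ← hc, h])
    · exact T.layOf_of_I (ha ▸ hx)
    · exact T.layOf_of_I (hb ▸ hy)
    · exact T.layOf_of_B (ha ▸ hx) (hc ▸ hwB)
    · exact T.lconsistent_layOf hInt hgood
    · intro hmem
      have := hgood.2 _ hmem
      rw [hb, ha] at this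
      exact T.asymm hxy this

/-- No 3-cycle has two of its vertices in `I`. -/
lemma noCyc2I (hInt : T.IsInterval I) (hIuniv : I ≠ Set.univ)
    (hmsd : T.MinusSelfDual 3) (hn : 8 ≤ Fintype.card V) :
    ∀ x y z : V, x ∈ I → y ∈ I →
      T.arc x y → T.arc y z → T.arc z x → False := by
  intro x y z hx hy hxy hyz hzx
  rcases T.layer_tri hInt z with hz | hz | hz
  · exact T.noCycI hInt hIuniv hmsd hn x y z hx hy hz hxy hyz hzx
  · exact T.asymm hyz (T.Iminus_arc hz hy)
  · exact T.asymm hzx (T.Iplus_arc hz hx)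

end Tournament

end NoCycles

section MainCore

open scoped Classical

namespace Tournament

variable {V : Type*} [Fintype V] (T : Tournament V) {I : Set V}

/-- `I⁺` has no 3-cycles. -/
lemma noCycB (hInt : T.IsInterval I) (hIuniv : I ≠ Set.univ)
    (hmsd : T.MinusSelfDual 3) (hn : 8 ≤ Fintype.card V)
    {x x' : V} (hx : x ∈ I) (hx' : x' ∈ I) (hxx' : T.arc x x') :
    ∀ u v w : V, u ∈ T.Iplus I → v ∈ T.Iplus I → w ∈ T.Iplus I →
      T.arc u v → T.arc v w → T.arc w u → False := by
  intro u v w hu hv hw huv hvw hwu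
  have hid := T.hCnt_swap L5 (by omega) hmsd ({x, x', u} : Finset V)
    (hCnt_triple_le_three x x' u)
  have hpos : 0 < T.hCnt (swapL L5) ({x, x', u} : Finset V) := by
    apply T.hCnt_pos _ _ ![v, u, w, x', x]
    · refine ⟨inj5 (T.arc_ne huv).symm (T.arc_ne hvw)
        (ne_of_mem_notmem hx' hv.1).symm (ne_of_mem_notmem hx hv.1).symm
        (T.arc_ne hwu).symm (ne_of_mem_notmem hx' hu.1).symm
        (ne_of_mem_notmem hx hu.1).symm (ne_of_mem_notmem hx' hw.1).symm
        (ne_of_mem_notmem hx hw.1).symm (T.arc_ne hxx').symm, ?_⟩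
      intro pp hp
      simp only [swapL, L5, List.map_cons, List.map_nil, List.mem_cons,
        List.not_mem_nil, or_false] at hp
      rcases hp with rfl|rfl|rfl|rfl|rfl|rfl|rfl|rfl|rfl|rfl
      exacts [huv, hwu, hvw, T.Iplus_arc hv hx', T.Iplus_arc hu hx',
        T.Iplus_arc hw hx', T.Iplus_arc hv hx, T.Iplus_arc hu hx,
        T.Iplus_arc hw hx, hxx']
    · intro m hm
      simp only [Finset.mem_insert, Finset.mem_singleton] at hm
      rcases hm with rfl|rfl|rfl
      exacts [⟨4, rfl⟩, ⟨3, rfl⟩, ⟨1, rfl⟩]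
  rw [← hid] at hpos
  unfold hCnt at hpos
  rw [Finset.card_pos] at hpos
  obtain ⟨f, hf⟩ := hpos
  obtain ⟨-, hgood, hmarks⟩ := Finset.mem_filter.mp hf
  obtain ⟨a, ha⟩ := hmarks x (mem_triple_left x x' u)
  obtain ⟨b, hb⟩ := hmarks x' (mem_triple_mid x x' u)
  obtain ⟨c, hc⟩ := hmarks u (mem_triple_right x x' u)
  have hii : IICycle L5 (layOf T I f) := by
    refine absV3 (layOf T I f) a b c ?_ ?_ ?_ ?_ ?_ ?_ ?_ ?_
    · intro h; exact (T.arc_ne hxx') (by rw [← ha, ← hb, h])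
    · intro h; exact (ne_of_mem_notmem hx hu.1) (by rw [← ha, ← hc, h])
    · intro h; exact (ne_of_mem_notmem hx' hu.1) (by rw [← hb, ← hc, h])
    · exact T.layOf_of_I (ha ▸ hx)
    · exact T.layOf_of_I (hb ▸ hx')
    · exact T.layOf_of_B (ha ▸ hx) (hc ▸ hu)
    · exact T.lconsistent_layOf hInt hgood
    · intro hmem
      have := hgood.2 _ hmem
      rw [hb, ha] at this
      exact T.asymm hxx' this
  obtain ⟨s, t, u', m1, m2, m3, l1, l2⟩ := hii
  exact T.noCyc2I hInt hIuniv hmsd hn (f s) (f t) (f u')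
    (T.mem_I_of_layOf l1) (T.mem_I_of_layOf l2)
    (hgood.2 _ m1) (hgood.2 _ m2) (hgood.2 _ m3)

/-- `I⁻` has no 3-cycles. -/
lemma noCycA (hInt : T.IsInterval I) (hIuniv : I ≠ Set.univ)
    (hmsd : T.MinusSelfDual 3) (hn : 8 ≤ Fintype.card V)
    {x x' : V} (hx : x ∈ I) (hx' : x' ∈ I) (hxx' : T.arc x x') :
    ∀ u v w : V, u ∈ T.Iminus I → v ∈ T.Iminus I → w ∈ T.Iminus I →
      T.arc u v → T.arc v w → T.arc w u → False := by
  intro u v w hu hv hw huv hvw hwu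
  have hid := T.hCnt_swap L5 (by omega) hmsd ({x, x', u} : Finset V)
    (hCnt_triple_le_three x x' u)
  have hpos : 0 < T.hCnt L5 ({x, x', u} : Finset V) := by
    apply T.hCnt_pos _ _ ![u, v, w, x, x']
    · refine ⟨inj5 (T.arc_ne huv) (T.arc_ne hwu).symm
        (ne_of_mem_notmem hx hu.1).symm (ne_of_mem_notmem hx' hu.1).symm
        (T.arc_ne hvw) (ne_of_mem_notmem hx hv.1).symm
        (ne_of_mem_notmem hx' hv.1).symm (ne_of_mem_notmem hx hw.1).symm
        (ne_of_mem_notmem hx' hw.1).symm (T.arc_ne hxx'), ?_⟩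
      intro pp hp
      simp only [L5, List.mem_cons, List.not_mem_nil, or_false] at hp
      rcases hp with rfl|rfl|rfl|rfl|rfl|rfl|rfl|rfl|rfl|rfl
      exacts [huv, hvw, hwu, T.Iminus_arc hu hx, T.Iminus_arc hv hx,
        T.Iminus_arc hw hx, T.Iminus_arc hu hx', T.Iminus_arc hv hx',
        T.Iminus_arc hw hx', hxx']
    · intro m hm
      simp only [Finset.mem_insert, Finset.mem_singleton] at hm
      rcases hm with rfl|rfl|rfl
      exacts [⟨3, rfl⟩, ⟨4, rfl⟩, ⟨0, rfl⟩]
  rw [hid] at hpos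
  unfold hCnt at hpos
  rw [Finset.card_pos] at hpos
  obtain ⟨f, hf⟩ := hpos
  obtain ⟨-, hgood, hmarks⟩ := Finset.mem_filter.mp hf
  obtain ⟨a, ha⟩ := hmarks x (mem_triple_left x x' u)
  obtain ⟨b, hb⟩ := hmarks x' (mem_triple_mid x x' u)
  obtain ⟨c, hc⟩ := hmarks u (mem_triple_right x x' u)
  have hii : IICycle (swapL L5) (layOf T I f) := by
    refine absV4 (layOf T I f) a b c ?_ ?_ ?_ ?_ ?_ ?_ ?_ ?_
    · intro h; exact (T.arc_ne hxx') (by rw [← ha, ← hb, h])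
    · intro h; exact (ne_of_mem_notmem hx hu.1) (by rw [← ha, ← hc, h])
    · intro h; exact (ne_of_mem_notmem hx' hu.1) (by rw [← hb, ← hc, h])
    · exact T.layOf_of_I (ha ▸ hx)
    · exact T.layOf_of_I (hb ▸ hx')
    · exact T.layOf_of_A (hc ▸ hu)
    · exact T.lconsistent_layOf hInt hgood
    · intro hmem
      have := hgood.2 _ hmem
      rw [hb, ha] at this
      exact T.asymm hxx' this
  obtain ⟨s, t, u', m1, m2, m3, l1, l2⟩ := hii
  exact T.noCyc2I hInt hIuniv hmsd hn (f s) (f t) (f u')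
    (T.mem_I_of_layOf l1) (T.mem_I_of_layOf l2)
    (hgood.2 _ m1) (hgood.2 _ m2) (hgood.2 _ m3)

/-- The `E⁻` extraction. -/
lemma Eext (hInt : T.IsInterval I)
    {x x' d : V} (hx : x ∈ I) (hx' : x' ∈ I) (hxx' : T.arc x x')
    (hd : d ∈ T.Iplus I)
    (hpos : 0 < T.hCnt (swapL LE) ({x, x', d} : Finset V)) :
    ∃ z c' : V, z ∈ T.Iminus I ∧ c' ∈ T.Iminus I ∧
      T.arc d z ∧ T.arc c' d ∧ T.arc c' z := by
  unfold hCnt at hpos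
  rw [Finset.card_pos] at hpos
  obtain ⟨f, hf⟩ := hpos
  obtain ⟨-, hgood, hmarks⟩ := Finset.mem_filter.mp hf
  obtain ⟨a, ha⟩ := hmarks x (mem_triple_left x x' d)
  obtain ⟨b, hb⟩ := hmarks x' (mem_triple_mid x x' d)
  obtain ⟨c, hc⟩ := hmarks d (mem_triple_right x x' d)
  have hw : EWitness (swapL LE) (layOf T I f) c := by
    refine absE (layOf T I f) a b c ?_ ?_ ?_ ?_ ?_ ?_ ?_ ?_
    · intro h; exact (T.arc_ne hxx') (by rw [← ha, ← hb, h])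
    · intro h; exact (ne_of_mem_notmem hx hd.1) (by rw [← ha, ← hc, h])
    · intro h; exact (ne_of_mem_notmem hx' hd.1) (by rw [← hb, ← hc, h])
    · exact T.layOf_of_I (ha ▸ hx)
    · exact T.layOf_of_I (hb ▸ hx')
    · exact T.layOf_of_B (ha ▸ hx) (hc ▸ hd)
    · exact T.lconsistent_layOf hInt hgood
    · intro hmem
      have := hgood.2 _ hmem
      rw [hb, ha] at this
      exact T.asymm hxx' this
  obtain ⟨zs, cs, l1, l2, m1, m2, m3⟩ := hw
  refine ⟨f zs, f cs, T.mem_A_of_layOf l1, T.mem_A_of_layOf l2, ?_, ?_, ?_⟩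
  · have := hgood.2 _ m1; rwa [hc] at this
  · have := hgood.2 _ m2; rwa [hc] at this
  · exact hgood.2 _ m3

/-- Producing a T1-configuration from a back-arc `β → d'` into `A` with an
`A`-witness. -/
lemma subB (hInt : T.IsInterval I) (hmsd : T.MinusSelfDual 3)
    (hn : 8 ≤ Fintype.card V) {x : V} (hx : x ∈ I)
    {β d' α'' : V} (hβ : β ∈ T.Iplus I) (hd' : d' ∈ T.Iminus I)
    (hβd : T.arc β d') (hα : α'' ∈ T.Iminus I)
    (hαβ : T.arc α'' β) (hαd : T.arc α'' d') :
    ∃ w, w ∈ T.Iplus I ∧ T.arc β w ∧ T.arc d' w := by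
  have hxβ : T.arc x β := T.Iplus_arc hβ hx
  have hd'x : T.arc d' x := T.Iminus_arc hd' hx
  have hid := T.hCnt_swap L4 (by omega) hmsd ({x, β, d'} : Finset V)
    (hCnt_triple_le_three x β d')
  have hpos : 0 < T.hCnt (swapL L4) ({x, β, d'} : Finset V) := by
    apply T.hCnt_pos _ _ ![β, x, d', α'']
    · refine ⟨inj4 (ne_of_mem_notmem hx hβ.1).symm (T.arc_ne hβd)
        (T.arc_ne hαβ).symm (ne_of_mem_notmem hx hd'.1)
        (ne_of_mem_notmem hx hα.1) (T.arc_ne hαd).symm, ?_⟩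
      intro pp hp
      simp only [swapL, L4, List.map_cons, List.map_nil, List.mem_cons,
        List.not_mem_nil, or_false] at hp
      rcases hp with rfl|rfl|rfl|rfl|rfl|rfl
      exacts [hxβ, hd'x, hβd, hαβ, T.Iminus_arc hα hx, hαd]
    · intro m hm
      simp only [Finset.mem_insert, Finset.mem_singleton] at hm
      rcases hm with rfl|rfl|rfl
      exacts [⟨1, rfl⟩, ⟨0, rfl⟩, ⟨2, rfl⟩]
  rw [← hid] at hpos
  obtain ⟨w, hxw, hβw, hd'w⟩ := T.ext4_pos hxβ hβd hd'x hpos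
  rcases T.layer_tri hInt w with hwI | hwA | hwB
  · exact absurd hβw (fun hc => T.asymm hc (T.Iplus_arc hβ hwI))
  · exact absurd hxw (fun hc => T.asymm hc (T.Iminus_arc hwA hx))
  · exact ⟨w, hwB, hβw, hd'w⟩

/-- Any diamond yields a T1-configuration. -/
lemma T1_exists (hInt : T.IsInterval I) (hIuniv : I ≠ Set.univ)
    (hmsd : T.MinusSelfDual 3) (hn : 8 ≤ Fintype.card V)
    {x x' : V} (hx : x ∈ I) (hx' : x' ∈ I) (hxx' : T.arc x x')
    {p q r s : V} (hpq : T.arc p q) (hqr : T.arc q r) (hrp : T.arc r p)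
    (hps : T.arc p s) (hqs : T.arc q s) (hrs : T.arc r s) :
    ∃ β α d, β ∈ T.Iplus I ∧ α ∈ T.Iminus I ∧ d ∈ T.Iplus I ∧
      T.arc β α ∧ T.arc α d ∧ T.arc β d := by
  have noc2 := T.noCyc2I hInt hIuniv hmsd hn
  have hsI : ∀ u : V, u ∈ T.Iplus I → T.arc u s → s ∉ I := by
    intro u hu hus hsI
    exact T.asymm hus (T.Iplus_arc hu hsI)
  have hsA : ∀ u : V, u ∈ I → T.arc u s → s ∉ T.Iminus I := by
    intro u hu hus hsA
    exact T.asymm hus (T.Iminus_arc hsA hu)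
  rcases T.layer_tri hInt p with hp | hp | hp <;>
    rcases T.layer_tri hInt q with hq | hq | hq <;>
    rcases T.layer_tri hInt r with hr | hr | hr
  -- p ∈ I
  · exact (noc2 p q r hp hq hpq hqr hrp).elim
  · exact (noc2 p q r hp hq hpq hqr hrp).elim
  · exact (noc2 p q r hp hq hpq hqr hrp).elim
  · exact (T.asymm hpq (T.Iminus_arc hq hp)).elim
  · exact (T.asymm hpq (T.Iminus_arc hq hp)).elim
  · exact (T.asymm hpq (T.Iminus_arc hq hp)).elim
  · exact (noc2 r p q hr hp hrp hpq hqr).elim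
  · -- (I, B, A) : cycle p ∈ I, q ∈ B, r ∈ A
    rcases T.layer_tri hInt s with hs | hs | hs
    · exact ((hsI q hq hqs) hs).elim
    · exact ((hsA p hp hps) hs).elim
    · exact ⟨q, r, s, hq, hr, hs, hqr, hrs, hqs⟩
  · exact (T.asymm hrp (T.Iplus_arc hr hp)).elim
  -- p ∈ A
  · exact (noc2 q r p hq hr hqr hrp hpq).elim
  · exact (T.asymm hqr (T.Iminus_arc hr hq)).elim
  · -- (A, I, B) : cycle q ∈ I, r ∈ B, p ∈ A
    rcases T.layer_tri hInt s with hs | hs | hs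
    · exact ((hsI r hr hrs) hs).elim
    · exact ((hsA q hq hqs) hs).elim
    · exact ⟨r, p, s, hr, hp, hs, hrp, hps, hrs⟩
  · exact (T.asymm hrp (T.Iminus_arc hp hr)).elim
  · -- (A, A, A)
    exact (T.noCycA hInt hIuniv hmsd hn hx hx' hxx' p q r hp hq hr hpq hqr hrp).elim
  · -- (A, A, B) : back-arc r → p
    rcases T.layer_tri hInt s with hs | hs | hs
    · exact ((hsI r hr hrs) hs).elim
    · obtain ⟨w, hwB, h1, h2⟩ := T.subB hInt hmsd hn hx hr hs hrs hq hqr hqs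
      exact ⟨r, s, w, hr, hs, hwB, hrs, h2, h1⟩
    · exact ⟨r, p, s, hr, hp, hs, hrp, hps, hrs⟩
  · exact (T.asymm hrp (T.Iminus_arc hp hr)).elim
  · -- (A, B, A) : back-arc q → r
    rcases T.layer_tri hInt s with hs | hs | hs
    · exact ((hsI q hq hqs) hs).elim
    · obtain ⟨w, hwB, h1, h2⟩ := T.subB hInt hmsd hn hx hq hs hqs hp hpq hps
      exact ⟨q, s, w, hq, hs, hwB, hqs, h2, h1⟩
    · exact ⟨q, r, s, hq, hr, hs, hqr, hrs, hqs⟩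
  · -- (A, B, B) : back-arc r → p
    rcases T.layer_tri hInt s with hs | hs | hs
    · exact ((hsI q hq hqs) hs).elim
    · obtain ⟨w, hwB, h1, h2⟩ := T.subB hInt hmsd hn hx hq hs hqs hp hpq hps
      exact ⟨q, s, w, hq, hs, hwB, hqs, h2, h1⟩
    · exact ⟨r, p, s, hr, hp, hs, hrp, hps, hrs⟩
  -- p ∈ B
  · exact (T.asymm hpq (T.Iplus_arc hp hq)).elim
  · exact (T.asymm hpq (T.Iplus_arc hp hq)).elim
  · exact (T.asymm hpq (T.Iplus_arc hp hq)).elim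
  · -- (B, A, I) : cycle r ∈ I, p ∈ B, q ∈ A
    rcases T.layer_tri hInt s with hs | hs | hs
    · exact ((hsI p hp hps) hs).elim
    · exact ((hsA r hr hrs) hs).elim
    · exact ⟨p, q, s, hp, hq, hs, hpq, hqs, hps⟩
  · -- (B, A, A) : back-arc p → q
    rcases T.layer_tri hInt s with hs | hs | hs
    · exact ((hsI p hp hps) hs).elim
    · obtain ⟨w, hwB, h1, h2⟩ := T.subB hInt hmsd hn hx hp hs hps hr hrp hrs
      exact ⟨p, s, w, hp, hs, hwB, hps, h2, h1⟩
    · exact ⟨p, q, s, hp, hq, hs, hpq, hqs, hps⟩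
  · -- (B, A, B) : back-arc p → q
    rcases T.layer_tri hInt s with hs | hs | hs
    · exact ((hsI p hp hps) hs).elim
    · obtain ⟨w, hwB, h1, h2⟩ := T.subB hInt hmsd hn hx hr hs hrs hq hqr hqs
      exact ⟨r, s, w, hr, hs, hwB, hrs, h2, h1⟩
    · exact ⟨p, q, s, hp, hq, hs, hpq, hqs, hps⟩
  · exact (T.asymm hqr (T.Iplus_arc hq hr)).elim
  · -- (B, B, A) : back-arc q → r
    rcases T.layer_tri hInt s with hs | hs | hs
    · exact ((hsI p hp hps) hs).elim
    · obtain ⟨w, hwB, h1, h2⟩ := T.subB hInt hmsd hn hx hp hs hps hr hrp hrs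
      exact ⟨p, s, w, hp, hs, hwB, hps, h2, h1⟩
    · exact ⟨q, r, s, hq, hr, hs, hqr, hrs, hqs⟩
  · -- (B, B, B)
    exact (T.noCycB hInt hIuniv hmsd hn hx hx' hxx' p q r hp hq hr hpq hqr hrp).elim

end Tournament

end MainCore

section Final

open scoped Classical

namespace Tournament

variable {V : Type*} [Fintype V] (T : Tournament V) {I : Set V}

/-- The main contradiction: a `{-3}`-self-dual tournament on at least 8
vertices with a nontrivial interval has no positive diamond. -/
lemma core (hn : 8 ≤ Fintype.card V) (hmsd : T.MinusSelfDual 3)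
    (hInt : T.IsInterval I) (hIuniv : I ≠ Set.univ)
    {x x' : V} (hx : x ∈ I) (hx' : x' ∈ I) (hxx' : T.arc x x')
    {p q r s : V} (hpq : T.arc p q) (hqr : T.arc q r) (hrp : T.arc r p)
    (hps : T.arc p s) (hqs : T.arc q s) (hrs : T.arc r s) : False := by
  obtain ⟨β₀, α₀, d₀, hβ₀, hα₀, hd₀, g1, g2, g3⟩ :=
    T.T1_exists hInt hIuniv hmsd hn hx hx' hxx' hpq hqr hrp hps hqs hrs
  set TS : Finset (V × V × V) := Finset.univ.filter
    (fun t => t.1 ∈ T.Iplus I ∧ t.2.1 ∈ T.Iminus I ∧ t.2.2 ∈ T.Iplus I ∧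
      T.arc t.1 t.2.1 ∧ T.arc t.2.1 t.2.2 ∧ T.arc t.1 t.2.2) with hTS
  have hne : TS.Nonempty := by
    refine ⟨(β₀, α₀, d₀), Finset.mem_filter.mpr ⟨Finset.mem_univ _, ?_⟩⟩
    exact ⟨hβ₀, hα₀, hd₀, g1, g2, g3⟩
  set μ : V → ℕ :=
    fun d => (Finset.univ.filter (fun v => v ∈ T.Iplus I ∧ T.arc d v)).card with hμ
  obtain ⟨t₀, ht₀, hmin⟩ := Finset.exists_min_image TS (fun t => μ t.2.2) hne
  obtain ⟨β, α, d⟩ := t₀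
  obtain ⟨hβB, hαA, hdB, hβα, hαd, hβd⟩ := (Finset.mem_filter.mp ht₀).2
  -- E⁺ positivity at {x, x', d}
  have hidE := T.hCnt_swap LE (by omega) hmsd ({x, x', d} : Finset V)
    (hCnt_triple_le_three x x' d)
  have hposE : 0 < T.hCnt LE ({x, x', d} : Finset V) := by
    apply T.hCnt_pos _ _ ![x, x', α, β, d]
    · refine ⟨inj5 (T.arc_ne hxx') (ne_of_mem_notmem hx hαA.1)
        (ne_of_mem_notmem hx hβB.1) (ne_of_mem_notmem hx hdB.1)
        (ne_of_mem_notmem hx' hαA.1) (ne_of_mem_notmem hx' hβB.1)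
        (ne_of_mem_notmem hx' hdB.1) (T.arc_ne hβα).symm (T.arc_ne hαd)
        (T.arc_ne hβd), ?_⟩
      intro pp hp
      simp only [LE, List.mem_cons, List.not_mem_nil, or_false] at hp
      rcases hp with rfl|rfl|rfl|rfl|rfl|rfl|rfl|rfl|rfl|rfl
      exacts [hxx', T.Iminus_arc hαA hx, T.Iminus_arc hαA hx',
        T.Iplus_arc hβB hx, T.Iplus_arc hβB hx', hβα, hαd, hβd,
        T.Iplus_arc hdB hx, T.Iplus_arc hdB hx']
    · intro m hm
      simp only [Finset.mem_insert, Finset.mem_singleton] at hm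
      rcases hm with rfl|rfl|rfl
      exacts [⟨0, rfl⟩, ⟨1, rfl⟩, ⟨4, rfl⟩]
  rw [hidE] at hposE
  obtain ⟨z, c', hzA, hcA, hdz, hcd, hcz⟩ := T.Eext hInt hx hx' hxx' hdB hposE
  -- δ⁻ positivity on the 3-cycle (x, d, z) with center c'
  have hxd : T.arc x d := T.Iplus_arc hdB hx
  have hzx : T.arc z x := T.Iminus_arc hzA hx
  have hid4 := T.hCnt_swap L4 (by omega) hmsd ({x, d, z} : Finset V)
    (hCnt_triple_le_three x d z)
  have hpos4 : 0 < T.hCnt (swapL L4) ({x, d, z} : Finset V) := by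
    apply T.hCnt_pos _ _ ![d, x, z, c']
    · refine ⟨inj4 (ne_of_mem_notmem hx hdB.1).symm (T.arc_ne hdz)
        (T.arc_ne hcd).symm (ne_of_mem_notmem hx hzA.1)
        (ne_of_mem_notmem hx hcA.1) (T.arc_ne hcz).symm, ?_⟩
      intro pp hp
      simp only [swapL, L4, List.map_cons, List.map_nil, List.mem_cons,
        List.not_mem_nil, or_false] at hp
      rcases hp with rfl|rfl|rfl|rfl|rfl|rfl
      exacts [hxd, hzx, hdz, hcd, T.Iminus_arc hcA hx, hcz]
    · intro m hm
      simp only [Finset.mem_insert, Finset.mem_singleton] at hm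
      rcases hm with rfl|rfl|rfl
      exacts [⟨1, rfl⟩, ⟨0, rfl⟩, ⟨2, rfl⟩]
  rw [← hid4] at hpos4
  obtain ⟨w, hxw, hdw, hzw⟩ := T.ext4_pos hxd hdz hzx hpos4
  have hwB : w ∈ T.Iplus I := by
    rcases T.layer_tri hInt w with hw | hw | hw
    · exact absurd hdw (fun hc => T.asymm hc (T.Iplus_arc hdB hw))
    · exact absurd hxw (fun hc => T.asymm hc (T.Iminus_arc hw hx))
    · exact hw
  have hnew : (d, z, w) ∈ TS := by
    refine Finset.mem_filter.mpr ⟨Finset.mem_univ _, ?_⟩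
    exact ⟨hdB, hzA, hwB, hdz, hzw, hdw⟩
  have hle := hmin _ hnew
  have hlt : μ w < μ d := by
    apply Finset.card_lt_card
    rw [Finset.ssubset_iff_of_subset]
    · refine ⟨w, Finset.mem_filter.mpr ⟨Finset.mem_univ _, hwB, hdw⟩, ?_⟩
      intro hc
      exact T.irrefl w (Finset.mem_filter.mp hc).2.2
    · intro v hv
      obtain ⟨-, hvB, hwv⟩ := Finset.mem_filter.mp hv
      refine Finset.mem_filter.mpr ⟨Finset.mem_univ _, hvB, ?_⟩
      by_cases hdv : d = v
      · subst hdv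
        exact (T.asymm hdw hwv).elim
      · rcases T.arc_total hdv with h | h
        · exact h
        · exact (T.noCycB hInt hIuniv hmsd hn hx hx' hxx' d w v
            hdB hwB hvB hdw hwv h).elim
  simp only at hle hlt
  omega

lemma selfDual_dual {W : Type*} {S : Tournament W} (h : S.SelfDual) :
    S.dual.SelfDual := by
  obtain ⟨e, he⟩ := h
  exact ⟨e, fun u v => he v u⟩

lemma minusSD_dual (h : T.MinusSelfDual 3) : T.dual.MinusSelfDual 3 := by
  intro X hX
  exact selfDual_dual (h X hX)

lemma interval_dual (h : T.IsInterval I) : T.dual.IsInterval I := by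
  intro v hv
  exact (h v hv).symm

end Tournament

end Final






/-- Every decomposable tournament with at least 8 vertices that
embeds a diamond is not `{-3}`-self dual. -/
theorem stmt13 {V : Type*} [Fintype V] (T : Tournament V)
    (hdec : T.Decomposable) (hcard : 8 ≤ Fintype.card V)
    (hd : T.EmbedsDiamond) :
    ¬ T.MinusSelfDual 3 := by
  intro hmsd
  -- extract a nontrivial interval
  rw [Tournament.Decomposable, Tournament.Indecomposable] at hdec
  push_neg at hdec
  obtain ⟨I, hInt, hIne, hIuniv, hIsing⟩ := hdec
  obtain ⟨x, hx⟩ := hIne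
  have hpair : ∃ x' ∈ I, x' ≠ x := by
    by_contra hc
    push_neg at hc
    exact hIsing x (Set.eq_singleton_iff_unique_mem.mpr ⟨hx, hc⟩)
  obtain ⟨x', hx', hxne⟩ := hpair
  -- extract a concrete diamond
  obtain ⟨X, hX4, hiso⟩ := hd
  rcases hiso with ⟨e, he⟩ | ⟨e, he⟩
  · -- positive diamond in T
    set vi : Fin 4 → V := fun i => ((e.symm i : X) : V) with hvi
    have harc : ∀ i j : Fin 4, Tournament.DeltaPlus.arc i j → T.arc (vi i) (vi j) := by
      intro i j hij
      refine (he (e.symm i) (e.symm j)).mpr ?_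
      rw [e.apply_symm_apply, e.apply_symm_apply]
      exact hij
    have h01 := harc 0 1 (Or.inl ⟨rfl, rfl⟩)
    have h12 := harc 1 2 (Or.inr (Or.inl ⟨rfl, rfl⟩))
    have h20 := harc 2 0 (Or.inr (Or.inr (Or.inl ⟨rfl, rfl⟩)))
    have h03 := harc 0 3 (Or.inr (Or.inr (Or.inr (Or.inl ⟨rfl, rfl⟩))))
    have h13 := harc 1 3 (Or.inr (Or.inr (Or.inr (Or.inr (Or.inl ⟨rfl, rfl⟩)))))
    have h23 := harc 2 3 (Or.inr (Or.inr (Or.inr (Or.inr (Or.inr ⟨rfl, rfl⟩)))))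
    rcases T.arc_total hxne with hxx | hxx
    · exact T.core hcard hmsd hInt hIuniv hx' hx hxx h01 h12 h20 h03 h13 h23
    · exact T.core hcard hmsd hInt hIuniv hx hx' hxx h01 h12 h20 h03 h13 h23
  · -- negative diamond in T: pass to the dual
    set vi : Fin 4 → V := fun i => ((e.symm i : X) : V) with hvi
    have harc : ∀ i j : Fin 4, Tournament.DeltaPlus.arc i j →
        T.dual.arc (vi i) (vi j) := by
      intro i j hij
      show T.arc (vi j) (vi i)
      refine (he (e.symm j) (e.symm i)).mpr ?_
      show Tournament.DeltaPlus.arc (e (e.symm i)) (e (e.symm j))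
      rw [e.apply_symm_apply, e.apply_symm_apply]
      exact hij
    have h01 := harc 0 1 (Or.inl ⟨rfl, rfl⟩)
    have h12 := harc 1 2 (Or.inr (Or.inl ⟨rfl, rfl⟩))
    have h20 := harc 2 0 (Or.inr (Or.inr (Or.inl ⟨rfl, rfl⟩)))
    have h03 := harc 0 3 (Or.inr (Or.inr (Or.inr (Or.inl ⟨rfl, rfl⟩))))
    have h13 := harc 1 3 (Or.inr (Or.inr (Or.inr (Or.inr (Or.inl ⟨rfl, rfl⟩)))))
    have h23 := harc 2 3 (Or.inr (Or.inr (Or.inr (Or.inr (Or.inr ⟨rfl, rfl⟩)))))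
    have hmsd' := T.minusSD_dual hmsd
    have hInt' := T.interval_dual hInt
    rcases T.dual.arc_total hxne with hxx | hxx
    · exact T.dual.core hcard hmsd' hInt' hIuniv hx' hx hxx h01 h12 h20 h03 h13 h23
    · exact T.dual.core hcard hmsd' hInt' hIuniv hx hx' hxx h01 h12 h20 h03 h13 h23
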